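/- arXiv:0911.2746 — 2 statements merged into one kernel-verified Lean document; each statement's English description precedes it below -/
import Mathlib

section
/- For the Doob martingale M_ℓ = E[Σ_{j≠i} z_j ⟨φ_{i'}, φ_{π_j}⟩ | π^{−i}_{1→ℓ}, π_i = i'] built from a uniformly random ordered k-subset Π of {1,…,C} with k ≤ C/2, the martingale differences satisfy |M_ℓ − M_{ℓ−1}| ≤ c_ℓ := 2μ(|z_ℓ| + |z_{ℓ+1}| + ‖z‖_1/(C−k)), and Σ_{ℓ=1}^{k−1} c_ℓ² ≤ 36 μ² ‖z‖_2². -/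
open Finset

/-- Inner product between columns `a` and `b` of `Φ`: `⟨φ_a, φ_b⟩ = ∑_n conj(Φ n a) * Φ n b`. -/
noncomputable def colIP {N C : ℕ} (Φ : Matrix (Fin N) (Fin C) ℂ) (a b : Fin C) : ℂ :=
  ∑ n, (starRingEnd ℂ) (Φ n a) * Φ n b

/-- Worst-case coherence `μ = max_{i ≠ j} |⟨φ_i, φ_j⟩|`. -/
noncomputable def wcoh {N C : ℕ} (Φ : Matrix (Fin N) (Fin C) ℂ) : ℝ :=
  ⨆ p : {p : Fin C × Fin C // p.1 ≠ p.2}, ‖colIP Φ p.1.1 p.1.2‖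

/-- Average coherence `ν = (1/(C−1)) max_i |∑_{j ≠ i} ⟨φ_i, φ_j⟩|`. -/
noncomputable def acoh {N C : ℕ} (Φ : Matrix (Fin N) (Fin C) ℂ) : ℝ :=
  (1 / ((C : ℝ) - 1)) *
    ⨆ i : Fin C, ‖∑ j ∈ Finset.univ.filter (fun j => j ≠ i), colIP Φ i j‖


open MeasureTheory ProbabilityTheory

instance {n : ℕ} : MeasurableSpace (Fin n) := ⊤

/-- The coordinates of an ordered tuple with the `i`-th one removed: `rem i m` is the index in
`Fin k` of the `m`-th coordinate of `π^{−i}`. -/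
def rem {k : ℕ} (i : Fin k) (m : Fin (k - 1)) : Fin k :=
  if h : (m : ℕ) < (i : ℕ) then ⟨m, by omega⟩ else ⟨m + 1, by omega⟩

/-- The filtration generated by the first `ℓ` coordinates of `π^{−i}` on the space of
injective functions `Fin k → Fin C`. -/
def remFiltration (k C : ℕ) (i : Fin k) (ℓ : ℕ) :
    MeasurableSpace {f : Fin k → Fin C // Function.Injective f} :=
  MeasurableSpace.comap
    (fun ω => fun m : Fin (k - 1) => if (m : ℕ) < ℓ then ((ω.1 (rem i m) : ℕ) + 1) else 0)
    inferInstance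


/-! ### Auxiliary definitions and lemmas -/

open scoped ENNReal

instance {n : ℕ} : MeasurableSingletonClass (Fin n) := ⟨fun _ => trivial⟩

theorem sum_avg {α κ : Type*} [DecidableEq κ] (T : Finset α) (q : α → κ) (F : α → ℂ) :
    ∑ ω ∈ T, (((T.filter fun f => q f = q ω).card : ℂ))⁻¹ * ∑ f ∈ T.filter (fun f => q f = q ω), F f
      = ∑ f ∈ T, F f := by
  have key : ∀ ω ∈ T, (((T.filter fun f => q f = q ω).card : ℂ))⁻¹ * ∑ f ∈ T.filter (fun f => q f = q ω), F f
      = ∑ f ∈ T.filter (fun f => q f = q ω), (((T.filter fun g => q g = q f).card : ℂ))⁻¹ * F f := by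
    intro ω hω
    rw [Finset.mul_sum]
    refine Finset.sum_congr rfl fun f hf => ?_
    have : (T.filter fun g => q g = q f) = (T.filter fun g => q g = q ω) := by
      apply Finset.filter_congr
      intro g _
      simp only [Finset.mem_filter] at hf
      rw [hf.2]
    rw [this]
  rw [Finset.sum_congr rfl key]
  simp only [Finset.sum_filter]
  rw [Finset.sum_comm]
  refine Finset.sum_congr rfl fun f hf => ?_
  have : ∀ ω ∈ T, (if q f = q ω then (((T.filter fun g => q g = q f).card : ℂ))⁻¹ * F f else 0)
      = if q ω = q f then (((T.filter fun g => q g = q f).card : ℂ))⁻¹ * F f else 0 := by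
    intro ω _; simp [eq_comm]
  rw [Finset.sum_congr rfl this, ← Finset.sum_filter, Finset.sum_const, nsmul_eq_mul]
  have hcard : (T.filter fun ω => q ω = q f).card ≠ 0 := by
    have : 0 < (T.filter fun ω => q ω = q f).card := Finset.card_pos.2 ⟨f, Finset.mem_filter.2 ⟨hf, rfl⟩⟩
    omega
  rw [← mul_assoc, mul_inv_cancel₀ (by exact_mod_cast hcard), one_mul]


/-- Abbreviation for the sample space of injective tuples. -/
abbrev OmF (k C : ℕ) := {f : Fin k → Fin C // Function.Injective f}

variable {N C k : ℕ}

/-- The prefix map generating `remFiltration`. -/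
def pmfn (k C : ℕ) (i : Fin k) (ℓ : ℕ) (ω : OmF k C) : Fin (k - 1) → ℕ :=
  fun m => if (m : ℕ) < ℓ then ((ω.1 (rem i m) : ℕ) + 1) else 0

/-- The summand function of the Doob martingale. -/
noncomputable def Ffun (Φ : Matrix (Fin N) (Fin C) ℂ) (i : Fin k) (i' : Fin C) (z : Fin k → ℂ)
    (ω : OmF k C) : ℂ :=
  ∑ j ∈ Finset.univ.filter (fun j => j ≠ i), z j * colIP Φ i' (ω.1 j)

/-- The conditioned event as a finset. -/
def Sfin (k C : ℕ) (i : Fin k) (i' : Fin C) : Finset (OmF k C) :=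
  Finset.univ.filter (fun f => f.1 i = i')

/-- Explicit conditional average of `Ffun` given the first `ℓ` coordinates of `π⁻ⁱ`. -/
noncomputable def Gfun (Φ : Matrix (Fin N) (Fin C) ℂ) (i : Fin k) (i' : Fin C) (z : Fin k → ℂ)
    (ℓ : ℕ) (ω : OmF k C) : ℂ :=
  ((((Sfin k C i i').filter fun f => pmfn k C i ℓ f = pmfn k C i ℓ ω).card : ℂ))⁻¹ *
    ∑ f ∈ (Sfin k C i i').filter (fun f => pmfn k C i ℓ f = pmfn k C i ℓ ω), Ffun Φ i i' z f

def swapF {k C : ℕ} (b bs : Fin C) (f : OmF k C) : OmF k C :=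
  ⟨(Equiv.swap b bs) ∘ f.1, (Equiv.swap b bs).injective.comp f.2⟩

theorem swapF_apply {k C : ℕ} (b bs : Fin C) (f : OmF k C) (x : Fin k) :
    (swapF b bs f).1 x = Equiv.swap b bs (f.1 x) := rfl

theorem swapF_invol {k C : ℕ} (b bs : Fin C) (f : OmF k C) :
    swapF b bs (swapF b bs f) = f := by
  apply Subtype.ext
  funext x
  show Equiv.swap b bs (Equiv.swap b bs (f.1 x)) = f.1 x
  exact Equiv.swap_apply_self _ _ _

theorem rem_ne (i : Fin k) (m : Fin (k-1)) : rem i m ≠ i := by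
  unfold rem
  split <;> (intro h; rw [Fin.ext_iff] at h; simp at h; omega)

theorem rem_inj (i : Fin k) {m m' : Fin (k-1)} (h : rem i m = rem i m') : m = m' := by
  unfold rem at h
  rw [Fin.ext_iff] at h ⊢
  split at h <;> split at h <;> simp at h <;> omega

theorem rem_val (i : Fin k) (m : Fin (k-1)) : (rem i m : ℕ) = m ∨ (rem i m : ℕ) = m + 1 := by
  unfold rem; split <;> simp

theorem wcoh_nonneg (Φ : Matrix (Fin N) (Fin C) ℂ) : 0 ≤ wcoh Φ :=
  Real.iSup_nonneg fun p => norm_nonneg _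

theorem norm_colIP_le (Φ : Matrix (Fin N) (Fin C) ℂ) {a b : Fin C} (h : a ≠ b) :
    ‖colIP Φ a b‖ ≤ wcoh Φ := by
  have : BddAbove (Set.range fun p : {p : Fin C × Fin C // p.1 ≠ p.2} => ‖colIP Φ p.1.1 p.1.2‖) :=
    Set.Finite.bddAbove (Set.finite_range _)
  exact le_ciSup this ⟨(a, b), h⟩

theorem norm_colIP_sub_le (Φ : Matrix (Fin N) (Fin C) ℂ) {i' a b : Fin C}
    (ha : a ≠ i') (hb : b ≠ i') : ‖colIP Φ i' a - colIP Φ i' b‖ ≤ 2 * wcoh Φ := by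
  by_cases hab : a = b
  · subst hab; simp [wcoh_nonneg]
  calc ‖colIP Φ i' a - colIP Φ i' b‖ ≤ ‖colIP Φ i' a‖ + ‖colIP Φ i' b‖ := norm_sub_le _ _
    _ ≤ wcoh Φ + wcoh Φ := by
        gcongr
        · exact norm_colIP_le Φ (Ne.symm ha)
        · exact norm_colIP_le Φ (Ne.symm hb)
    _ = 2 * wcoh Φ := by ring


theorem pmfn_eq_iff (i : Fin k) (ℓ : ℕ) (f ω : OmF k C) :
    pmfn k C i ℓ f = pmfn k C i ℓ ω ↔
      ∀ m : Fin (k-1), (m : ℕ) < ℓ → f.1 (rem i m) = ω.1 (rem i m) := by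
  rw [funext_iff]
  constructor
  · intro h m hm
    have := h m
    simp only [pmfn, if_pos hm] at this
    exact Fin.ext (by omega)
  · intro h m
    simp only [pmfn]
    split
    · rw [h m (by assumption)]
    · rfl


theorem condFinite [Nonempty (OmF k C)] (i : Fin k) (i' : Fin C) :
    IsFiniteMeasure ((PMF.uniformOfFintype (OmF k C)).toMeasure[|{f : OmF k C | f.1 i = i'}]) := by
  constructor
  rw [ProbabilityTheory.cond_apply MeasurableSet.of_discrete]
  set P := (PMF.uniformOfFintype (OmF k C)).toMeasure with hP
  set S : Set (OmF k C) := {f : OmF k C | f.1 i = i'} with hS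
  have h1 : (P S)⁻¹ * P (S ∩ Set.univ) ≤ (P S)⁻¹ * P S := by
    gcongr; exact Set.inter_subset_left
  have h2 : (P S)⁻¹ * P S ≤ 1 := by simp
  exact lt_of_le_of_lt (le_trans h1 h2) ENNReal.one_lt_top



open Classical in
theorem setIntegral_cond [Nonempty (OmF k C)]
    (i : Fin k) (i' : Fin C) (s : Set (OmF k C)) (g : OmF k C → ℂ) :
    ∫ x in s, g x ∂((PMF.uniformOfFintype (OmF k C)).toMeasure[|
        {f : OmF k C | f.1 i = i'}])
      = ((((PMF.uniformOfFintype (OmF k C)).toMeasure {f : OmF k C | f.1 i = i'})⁻¹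
          * ((Fintype.card (OmF k C) : ℝ≥0∞))⁻¹).toReal)
        • ∑ ω ∈ Finset.univ.filter (fun ω => ω ∈ s ∧ ω.1 i = i'), g ω := by
  set P : Measure (OmF k C) := (PMF.uniformOfFintype (OmF k C)).toMeasure with hP
  set S : Set (OmF k C) := {f : OmF k C | f.1 i = i'} with hS
  set ν : Measure (OmF k C) := P[|S] with hν
  set r : ℝ := ((P S)⁻¹ * ((Fintype.card (OmF k C) : ℝ≥0∞))⁻¹).toReal with hr
  haveI : IsFiniteMeasure ν := by
    constructor
    rw [hν, ProbabilityTheory.cond_apply MeasurableSet.of_discrete]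
    have h1 : (P S)⁻¹ * P (S ∩ Set.univ) ≤ (P S)⁻¹ * P S := by
      gcongr; exact Set.inter_subset_left
    have h2 : (P S)⁻¹ * P S ≤ 1 := by simp
    exact lt_of_le_of_lt (le_trans h1 h2) ENNReal.one_lt_top
  have hint : Integrable g (ν.restrict s) := Integrable.of_finite
  rw [show (∫ x in s, g x ∂ν) = ∑ ω, ((ν.restrict s) {ω}).toReal • g ω from
    integral_fintype hint]
  have hw : ∀ ω : OmF k C, ((ν.restrict s) {ω}).toReal • g ω
      = if ω ∈ s ∧ ω.1 i = i' then r • g ω else 0 := by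
    intro ω
    have h1 : (ν.restrict s) {ω} = ν ({ω} ∩ s) :=
      Measure.restrict_apply MeasurableSet.of_discrete
    have h2 : ν ({ω} ∩ s) = (P S)⁻¹ * P (S ∩ ({ω} ∩ s)) := by
      rw [hν, ProbabilityTheory.cond_apply MeasurableSet.of_discrete]
    by_cases hs : ω ∈ s ∧ ω.1 i = i'
    · have he : S ∩ ({ω} ∩ s) = {ω} := by
        ext x; simp only [Set.mem_inter_iff, Set.mem_singleton_iff, Set.mem_setOf_eq, hS]
        constructor
        · rintro ⟨_, h, _⟩; exact h
        · rintro rfl; exact ⟨hs.2, rfl, hs.1⟩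
      rw [if_pos hs, h1, h2, he]
      have hPω : P {ω} = ((Fintype.card (OmF k C) : ℝ≥0∞))⁻¹ := by
        rw [hP, PMF.toMeasure_apply_singleton _ _ MeasurableSet.of_discrete,
          PMF.uniformOfFintype_apply]
      rw [hPω, hr]
    · have he : S ∩ ({ω} ∩ s) = ∅ := by
        ext x; simp only [Set.mem_inter_iff, Set.mem_singleton_iff, Set.mem_setOf_eq, hS,
          Set.mem_empty_iff_false, iff_false]
        rintro ⟨h1', rfl, h3'⟩
        exact hs ⟨h3', h1'⟩
      rw [if_neg hs, h1, h2, he]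
      simp
  rw [Finset.sum_congr rfl (fun ω _ => hw ω), ← Finset.sum_filter, Finset.smul_sum]


theorem Gfun_eq_condexp (Φ : Matrix (Fin N) (Fin C) ℂ) (i : Fin k) (i' : Fin C) (z : Fin k → ℂ)
    [Nonempty (OmF k C)]
    (μc : Measure (OmF k C))
    (hμc : μc = (PMF.uniformOfFintype (OmF k C)).toMeasure[|{f : OmF k C | f.1 i = i'}])
    (ℓ : ℕ) :
    Gfun Φ i i' z ℓ =ᵐ[μc] μc[Ffun Φ i i' z | remFiltration k C i ℓ] := by
  classical
  have hm : remFiltration k C i ℓ ≤ (Subtype.instMeasurableSpace : MeasurableSpace (OmF k C)) :=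
    fun s _ => MeasurableSet.of_discrete
  haveI : IsFiniteMeasure μc := hμc ▸ condFinite i i'
  haveI : SigmaFinite (μc.trim hm) := by
    haveI : IsFiniteMeasure (μc.trim hm) := MeasureTheory.isFiniteMeasure_trim hm
    infer_instance
  refine ae_eq_condExp_of_forall_setIntegral_eq hm Integrable.of_finite
    (fun s _ _ => Integrable.integrableOn Integrable.of_finite) ?_ ?_
  · -- set integral equality
    rintro s ⟨t, -, rfl⟩ -
    rw [hμc, setIntegral_cond i i', setIntegral_cond i i']
    congr 1
    have hqpre : (fun ω : OmF k C => fun m : Fin (k - 1) =>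
        if (m : ℕ) < ℓ then ((ω.1 (rem i m) : ℕ) + 1) else 0) = pmfn k C i ℓ := rfl
    rw [hqpre]
    set q := pmfn k C i ℓ with hq
    set T : Finset (OmF k C) := Finset.univ.filter (fun ω => ω ∈ q ⁻¹' t ∧ ω.1 i = i') with hT
    have hfib : ∀ ω ∈ T, ((Sfin k C i i').filter fun f => q f = q ω)
        = T.filter (fun f => q f = q ω) := by
      intro ω hω
      simp only [hT, Finset.mem_filter, Finset.mem_univ, true_and] at hω
      ext f
      simp only [Sfin, hT, Finset.mem_filter, Finset.mem_univ, true_and, Set.mem_preimage]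
      constructor
      · rintro ⟨h1, h2⟩
        exact ⟨⟨h2 ▸ hω.1, h1⟩, h2⟩
      · rintro ⟨⟨h1, h2⟩, h3⟩
        exact ⟨h2, h3⟩
    calc ∑ ω ∈ T, Gfun Φ i i' z ℓ ω
        = ∑ ω ∈ T, ((((T.filter fun f => q f = q ω).card : ℂ))⁻¹ *
            ∑ f ∈ T.filter (fun f => q f = q ω), Ffun Φ i i' z f) := by
          refine Finset.sum_congr rfl fun ω hω => ?_
          rw [Gfun]
          rw [hfib ω hω]
      _ = ∑ f ∈ T, Ffun Φ i i' z f := sum_avg T q _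
  · -- measurability
    set H : (Fin (k-1) → ℕ) → ℂ := fun t =>
        ((((Sfin k C i i').filter fun f => pmfn k C i ℓ f = t).card : ℂ))⁻¹ *
          ∑ f ∈ (Sfin k C i i').filter (fun f => pmfn k C i ℓ f = t), Ffun Φ i i' z f with hH
    have hmeas : Measurable[remFiltration k C i ℓ] (Gfun Φ i i' z ℓ) := by
      intro u hu
      exact MeasurableSpace.measurableSet_comap.2 ⟨H ⁻¹' u, MeasurableSet.of_discrete, rfl⟩
    exact (Measurable.stronglyMeasurable hmeas).aestronglyMeasurable


theorem ae_mem_S (i : Fin k) (i' : Fin C)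
    [Nonempty (OmF k C)]
    (μc : Measure (OmF k C))
    (hμc : μc = (PMF.uniformOfFintype (OmF k C)).toMeasure[|{f : OmF k C | f.1 i = i'}]) :
    ∀ᵐ ω ∂μc, ω.1 i = i' := by
  rw [ae_iff, hμc]
  set S : Set (OmF k C) := {f | f.1 i = i'}
  have h : {a : OmF k C | ¬ a.1 i = i'} = Sᶜ := rfl
  rw [h, ProbabilityTheory.cond_apply MeasurableSet.of_discrete]
  simp [Set.inter_comm, Set.inter_compl_self]

set_option maxHeartbeats 2000000 in
theorem Gdiff_bound (hk : 2 ≤ k) (hkC : 2 * k ≤ C) (Φ : Matrix (Fin N) (Fin C) ℂ)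
    (i : Fin k) (i' : Fin C) (z : Fin k → ℂ) (ω : OmF k C) (hω : ω.1 i = i')
    (ℓ : ℕ) (hℓ1 : 1 ≤ ℓ) (hℓ2 : ℓ ≤ k - 1) :
    ‖Gfun Φ i i' z ℓ ω - Gfun Φ i i' z (ℓ-1) ω‖ ≤
      2 * wcoh Φ * (‖z (rem i ⟨ℓ-1, by omega⟩)‖ + (∑ j, ‖z j‖) / ((C:ℝ) - k)) := by
  classical
  have hμ0 := wcoh_nonneg Φ
  have hmlt : ℓ - 1 < k - 1 := by omega
  set j₀ : Fin k := rem i ⟨ℓ-1, hmlt⟩ with hj₀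
  set bs : Fin C := ω.1 j₀ with hbs
  set B : Finset (OmF k C) := (Sfin k C i i').filter (fun f => pmfn k C i ℓ f = pmfn k C i ℓ ω) with hB
  set A : Finset (OmF k C) := (Sfin k C i i').filter
    (fun f => pmfn k C i (ℓ-1) f = pmfn k C i (ℓ-1) ω) with hA
  have hBmem : ∀ f : OmF k C, f ∈ B ↔ (f.1 i = i' ∧
      ∀ m : Fin (k-1), (m : ℕ) < ℓ → f.1 (rem i m) = ω.1 (rem i m)) := by
    intro f
    simp [hB, Sfin, Finset.mem_filter, pmfn_eq_iff]
  have hAmem : ∀ f : OmF k C, f ∈ A ↔ (f.1 i = i' ∧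
      ∀ m : Fin (k-1), (m : ℕ) < ℓ - 1 → f.1 (rem i m) = ω.1 (rem i m)) := by
    intro f
    simp [hA, Sfin, Finset.mem_filter, pmfn_eq_iff]
  set pool : Finset (Fin C) := univ.filter
    (fun b => b ≠ i' ∧ ∀ m : Fin (k-1), (m : ℕ) < ℓ - 1 → b ≠ ω.1 (rem i m)) with hpool
  -- basic facts
  have hbsi' : bs ≠ i' := by
    intro h
    exact rem_ne i ⟨ℓ-1, hmlt⟩ (ω.2 (h.trans hω.symm))
  have hbs_notpref : ∀ m : Fin (k-1), (m : ℕ) < ℓ - 1 → bs ≠ ω.1 (rem i m) := by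
    intro m hm h
    have h2 : ℓ - 1 = (m : ℕ) := by
      have := congrArg Fin.val (rem_inj i (ω.2 h)); simpa using this
    omega
  have hbspool : bs ∈ pool := by
    simp only [hpool, Finset.mem_filter, Finset.mem_univ, true_and]
    exact ⟨hbsi', hbs_notpref⟩
  have hωB : ω ∈ B := (hBmem ω).2 ⟨hω, fun m _ => rfl⟩
  have hωA : ω ∈ A := (hAmem ω).2 ⟨hω, fun m _ => rfl⟩
  have hfj₀ : ∀ f ∈ B, f.1 j₀ = bs := by
    intro f hf
    exact ((hBmem f).1 hf).2 ⟨ℓ-1, hmlt⟩ (by show ℓ - 1 < ℓ; omega)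
  -- the swap maps
  have hswap_mem : ∀ b ∈ pool, ∀ f ∈ B, swapF b bs f ∈ A := by
    intro b hb f hf
    simp only [hpool, Finset.mem_filter, Finset.mem_univ, true_and] at hb
    obtain ⟨hf1, hf2⟩ := (hBmem f).1 hf
    refine (hAmem _).2 ⟨?_, ?_⟩
    · show Equiv.swap b bs (f.1 i) = i'
      rw [hf1, Equiv.swap_apply_of_ne_of_ne (Ne.symm hb.1) (Ne.symm hbsi')]
    · intro m hm
      show Equiv.swap b bs (f.1 (rem i m)) = ω.1 (rem i m)
      rw [hf2 m (by omega), Equiv.swap_apply_of_ne_of_ne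
        (Ne.symm (hb.2 m hm)) (Ne.symm (hbs_notpref m hm))]
  have hinv_pool : ∀ g ∈ A, g.1 j₀ ∈ pool := by
    intro g hg
    obtain ⟨hg1, hg2⟩ := (hAmem g).1 hg
    simp only [hpool, Finset.mem_filter, Finset.mem_univ, true_and]
    constructor
    · intro h
      exact rem_ne i ⟨ℓ-1, hmlt⟩ (g.2 (h.trans hg1.symm))
    · intro m hm h
      rw [← hg2 m hm] at h
      have h2 : ℓ - 1 = (m : ℕ) := by
        have := congrArg Fin.val (rem_inj i (g.2 h)); simpa using this
      omega
  have hinv_mem : ∀ g ∈ A, swapF (g.1 j₀) bs g ∈ B := by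
    intro g hg
    obtain ⟨hg1, hg2⟩ := (hAmem g).1 hg
    have hpoolg := hinv_pool g hg
    simp only [hpool, Finset.mem_filter, Finset.mem_univ, true_and] at hpoolg
    refine (hBmem _).2 ⟨?_, ?_⟩
    · show Equiv.swap (g.1 j₀) bs (g.1 i) = i'
      rw [hg1, Equiv.swap_apply_of_ne_of_ne (Ne.symm hpoolg.1) (Ne.symm hbsi')]
    · intro m hm
      show Equiv.swap (g.1 j₀) bs (g.1 (rem i m)) = ω.1 (rem i m)
      by_cases hcase : (m : ℕ) < ℓ - 1
      · rw [hg2 m hcase, Equiv.swap_apply_of_ne_of_ne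
          (Ne.symm (hpoolg.2 m hcase)) (Ne.symm (hbs_notpref m hcase))]
      · have hmeq : m = ⟨ℓ-1, hmlt⟩ := by
          rw [Fin.ext_iff]; simp; omega
        subst hmeq
        rw [show rem i (⟨ℓ-1, hmlt⟩ : Fin (k-1)) = j₀ from rfl]
        rw [Equiv.swap_apply_left]
  have hswap_j₀ : ∀ b ∈ pool, ∀ f ∈ B, (swapF b bs f).1 j₀ = b := by
    intro b hb f hf
    show Equiv.swap b bs (f.1 j₀) = b
    rw [hfj₀ f hf, Equiv.swap_apply_right]
  -- sum identity
  have hsumid : ∀ G : OmF k C → ℂ,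
      ∑ g ∈ A, G g = ∑ p ∈ pool ×ˢ B, G (swapF p.1 bs p.2) := by
    intro G
    refine Finset.sum_nbij' (s := A) (t := pool ×ˢ B) (f := G)
      (g := fun p => G (swapF p.1 bs p.2))
      (i := fun g => ((g.1 j₀ : Fin C), swapF (g.1 j₀) bs g))
      (j := fun p => swapF p.1 bs p.2) ?_ ?_ ?_ ?_ ?_
    · intro g hg
      exact Finset.mem_product.2 ⟨hinv_pool g hg, hinv_mem g hg⟩
    · intro p hp
      obtain ⟨hp1, hp2⟩ := Finset.mem_product.1 hp
      exact hswap_mem p.1 hp1 p.2 hp2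
    · intro g hg
      simp only
      rw [swapF_invol]
    · intro p hp
      obtain ⟨hp1, hp2⟩ := Finset.mem_product.1 hp
      have h1 : (swapF p.1 bs p.2).1 j₀ = p.1 := hswap_j₀ p.1 hp1 p.2 hp2
      show ((swapF p.1 bs p.2).1 j₀, swapF ((swapF p.1 bs p.2).1 j₀) bs (swapF p.1 bs p.2)) = p
      rw [h1, swapF_invol]
    · intro g hg
      show G g = G (swapF (g.1 j₀) bs (swapF (g.1 j₀) bs g))
      rw [swapF_invol]
  -- cardinality identity
  have hAcard : (A.card : ℂ) = (pool.card : ℂ) * (B.card : ℂ) := by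
    have h := hsumid (fun _ => (1:ℂ))
    simpa [Finset.sum_const, Finset.card_product] using h
  have hBpos : 0 < B.card := Finset.card_pos.2 ⟨ω, hωB⟩
  have hpoolpos : 0 < pool.card := Finset.card_pos.2 ⟨bs, hbspool⟩
  have hBne : ((B.card : ℂ)) ≠ 0 := by exact_mod_cast Nat.pos_iff_ne_zero.1 hBpos
  have hpoolne : ((pool.card : ℂ)) ≠ 0 := by exact_mod_cast Nat.pos_iff_ne_zero.1 hpoolpos
  have hGB : Gfun Φ i i' z ℓ ω = (B.card : ℂ)⁻¹ * ∑ f ∈ B, Ffun Φ i i' z f := by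
    rw [Gfun, ← hB]
  have hGA : Gfun Φ i i' z (ℓ-1) ω = (A.card : ℂ)⁻¹ * ∑ f ∈ A, Ffun Φ i i' z f := by
    rw [Gfun, ← hA]
  set F := Ffun Φ i i' z with hF
  have hdiff : Gfun Φ i i' z ℓ ω - Gfun Φ i i' z (ℓ-1) ω
      = ((pool.card : ℂ) * B.card)⁻¹ *
        ∑ b ∈ pool, ∑ f ∈ B, (F f - F (swapF b bs f)) := by
    rw [hGB, hGA, hAcard, hsumid F, Finset.sum_product]
    have e1 : ∑ b ∈ pool, ∑ f ∈ B, (F f - F (swapF b bs f))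
        = (pool.card : ℂ) * (∑ f ∈ B, F f) - ∑ b ∈ pool, ∑ f ∈ B, F (swapF b bs f) := by
      simp only [Finset.sum_sub_distrib, Finset.sum_const, nsmul_eq_mul]
    rw [e1]
    field_simp
  set μ := wcoh Φ with hμ
  set Z1 : ℝ := ∑ j, ‖z j‖ with hZ1
  have hZ1nn : 0 ≤ Z1 := Finset.sum_nonneg fun j _ => norm_nonneg _
  -- the key per-f bound
  have key : ∀ f ∈ B, ∑ b ∈ pool, ‖F f - F (swapF b bs f)‖
      ≤ pool.card * (2 * μ * ‖z j₀‖) + 2 * μ * Z1 := by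
    intro f hf
    have hstep1 : ∀ b ∈ pool, ‖F f - F (swapF b bs f)‖ ≤
        ∑ j ∈ univ.filter (fun j => j ≠ i),
          ‖z j‖ * ‖colIP Φ i' (f.1 j) - colIP Φ i' (Equiv.swap b bs (f.1 j))‖ := by
      intro b hb
      have hexp : F f - F (swapF b bs f) = ∑ j ∈ univ.filter (fun j => j ≠ i),
          z j * (colIP Φ i' (f.1 j) - colIP Φ i' (Equiv.swap b bs (f.1 j))) := by
        rw [hF, Ffun, Ffun, ← Finset.sum_sub_distrib]
        exact Finset.sum_congr rfl fun j _ => by rw [swapF_apply, mul_sub]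
      rw [hexp]
      refine (norm_sum_le _ _).trans ?_
      exact Finset.sum_le_sum fun j _ => by rw [norm_mul]
    refine (Finset.sum_le_sum hstep1).trans ?_
    rw [Finset.sum_comm]
    have hj₀mem : j₀ ∈ univ.filter (fun j => j ≠ i) := by
      simp [hj₀, rem_ne i ⟨ℓ-1, hmlt⟩]
    rw [← Finset.add_sum_erase _ _ hj₀mem]
    have hterm1 : ∑ b ∈ pool, ‖z j₀‖ *
        ‖colIP Φ i' (f.1 j₀) - colIP Φ i' (Equiv.swap b bs (f.1 j₀))‖
        ≤ pool.card * (2 * μ * ‖z j₀‖) := by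
      refine (Finset.sum_le_card_nsmul pool _ (‖z j₀‖ * (2 * μ)) ?_).trans ?_
      · intro b hb
        simp only [hpool, Finset.mem_filter, Finset.mem_univ, true_and] at hb
        rw [hfj₀ f hf, Equiv.swap_apply_right]
        have := norm_colIP_sub_le Φ hbsi' hb.1
        exact mul_le_mul_of_nonneg_left this (norm_nonneg _)
      · rw [nsmul_eq_mul]
        ring_nf
        exact le_refl _
    have hterm2 : ∑ j ∈ (univ.filter (fun j => j ≠ i)).erase j₀,
        ∑ b ∈ pool, ‖z j‖ *
          ‖colIP Φ i' (f.1 j) - colIP Φ i' (Equiv.swap b bs (f.1 j))‖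
        ≤ 2 * μ * Z1 := by
      have hjb : ∀ j ∈ (univ.filter (fun j => j ≠ i)).erase j₀,
          ∑ b ∈ pool, ‖z j‖ *
            ‖colIP Φ i' (f.1 j) - colIP Φ i' (Equiv.swap b bs (f.1 j))‖
          ≤ ‖z j‖ * (2 * μ) := by
        intro j hj
        have hjne : j ≠ j₀ := (Finset.mem_erase.1 hj).1
        have hjnei : j ≠ i := by
          have := (Finset.mem_erase.1 hj).2
          simpa using this
        have hfjbs : f.1 j ≠ bs := by
          rw [← hfj₀ f hf]
          intro h
          exact hjne (f.2 h)
        have hbnd : ∀ b ∈ pool, ‖z j‖ *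
            ‖colIP Φ i' (f.1 j) - colIP Φ i' (Equiv.swap b bs (f.1 j))‖
            ≤ if f.1 j = b then ‖z j‖ * (2 * μ) else 0 := by
          intro b hb
          simp only [hpool, Finset.mem_filter, Finset.mem_univ, true_and] at hb
          by_cases hc : f.1 j = b
          · rw [if_pos hc, ← hc, Equiv.swap_apply_left]
            have hfj'i : f.1 j ≠ i' := by
              intro h
              exact hjnei (f.2 (h.trans (((hBmem f).1 hf).1.symm)))
            exact mul_le_mul_of_nonneg_left (norm_colIP_sub_le Φ hfj'i hbsi') (norm_nonneg _)
          · rw [if_neg hc, Equiv.swap_apply_of_ne_of_ne hc hfjbs]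
            simp
        refine (Finset.sum_le_sum hbnd).trans ?_
        rw [Finset.sum_ite_eq pool (f.1 j) (fun _ => ‖z j‖ * (2 * μ))]
        split
        · exact le_refl _
        · positivity
      refine (Finset.sum_le_sum hjb).trans ?_
      have : ∑ j ∈ (univ.filter (fun j => j ≠ i)).erase j₀, ‖z j‖ * (2 * μ)
          ≤ ∑ j : Fin k, ‖z j‖ * (2 * μ) := by
        refine Finset.sum_le_sum_of_subset_of_nonneg (Finset.subset_univ _) ?_
        intro j _ _
        positivity
      refine this.trans ?_
      rw [← Finset.sum_mul, ← hZ1]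
      ring_nf
      exact le_refl _
    exact add_le_add hterm1 hterm2
  -- pool cardinality lower bound
  have hpoolcard : C ≤ pool.card + ℓ := by
    classical
    set p : Fin C → Prop := fun b => b ≠ i' ∧ ∀ m : Fin (k-1), (m : ℕ) < ℓ - 1 → b ≠ ω.1 (rem i m)
      with hp
    set T : Finset (Fin (k-1)) := univ.filter (fun m => (m : ℕ) < ℓ - 1) with hT
    have hsub : univ.filter (fun b => ¬ p b) ⊆
        insert i' (T.image (fun m => ω.1 (rem i m))) := by
      intro b hb
      rw [Finset.mem_filter] at hb
      obtain ⟨-, hb⟩ := hb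
      simp only [hp] at hb
      push_neg at hb
      by_cases hbi : b = i'
      · rw [hbi]; exact Finset.mem_insert_self _ _
      · obtain ⟨m, hm1, hm2⟩ := hb hbi
        refine Finset.mem_insert_of_mem (Finset.mem_image.2 ⟨m, ?_, hm2.symm⟩)
        rw [hT, Finset.mem_filter]
        exact ⟨Finset.mem_univ _, hm1⟩
    have hTcard : T.card ≤ ℓ - 1 := by
      have h : T.card ≤ (Finset.range (ℓ-1)).card := by
        refine Finset.card_le_card_of_injOn (fun m : Fin (k-1) => (m : ℕ)) ?_ ?_
        · intro m hm
          have hm' : (m:ℕ) < ℓ - 1 := by simpa [hT] using hm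
          simpa using hm'
        · intro a _ b _ h
          exact Fin.ext h
      simpa using h
    have hnegcard : (univ.filter (fun b => ¬ p b)).card ≤ ℓ := by
      refine (Finset.card_le_card hsub).trans ?_
      refine (Finset.card_insert_le _ _).trans ?_
      have := Finset.card_image_le (s := T) (f := fun m => ω.1 (rem i m))
      omega
    have hsplit := Finset.card_filter_add_card_filter_not (s := (univ : Finset (Fin C))) p
    have huniv : (univ : Finset (Fin C)).card = C := by simp
    have : pool = univ.filter p := rfl
    rw [this]
    omega
  have hCk : (0:ℝ) < (C:ℝ) - k := by
    have : k + 2 ≤ C := by omega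
    have h2 : (k:ℝ) + 2 ≤ C := by exact_mod_cast this
    linarith
  have hpoolR : (C:ℝ) - k ≤ (pool.card : ℝ) := by
    have h1 : C ≤ pool.card + k := by omega
    have h2 : (C:ℝ) ≤ (pool.card : ℝ) + k := by exact_mod_cast h1
    linarith
  have hpoolRpos : (0:ℝ) < (pool.card : ℝ) := by exact_mod_cast hpoolpos
  have hBRpos : (0:ℝ) < (B.card : ℝ) := by exact_mod_cast hBpos
  -- outer bound
  have houter : ‖∑ b ∈ pool, ∑ f ∈ B, (F f - F (swapF b bs f))‖
      ≤ B.card * (pool.card * (2 * μ * ‖z j₀‖) + 2 * μ * Z1) := by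
    refine (norm_sum_le _ _).trans ?_
    refine le_trans (Finset.sum_le_sum fun b (_ : b ∈ pool) => norm_sum_le B _) ?_
    rw [Finset.sum_comm]
    refine (Finset.sum_le_sum key).trans ?_
    rw [Finset.sum_const, nsmul_eq_mul]
  have hnorminv : ‖((pool.card : ℂ) * B.card)⁻¹‖ = ((pool.card : ℝ) * B.card)⁻¹ := by
    rw [norm_inv, norm_mul, Complex.norm_natCast, Complex.norm_natCast]
  have hmain : ‖Gfun Φ i i' z ℓ ω - Gfun Φ i i' z (ℓ-1) ω‖
      ≤ 2 * μ * ‖z j₀‖ + 2 * μ * Z1 / (pool.card : ℝ) := by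
    rw [hdiff, norm_mul, hnorminv]
    have h1 : ((pool.card : ℝ) * B.card)⁻¹ * ‖∑ b ∈ pool, ∑ f ∈ B, (F f - F (swapF b bs f))‖
        ≤ ((pool.card : ℝ) * B.card)⁻¹ * (B.card * (pool.card * (2 * μ * ‖z j₀‖) + 2 * μ * Z1)) := by
      refine mul_le_mul_of_nonneg_left houter ?_
      positivity
    refine h1.trans (le_of_eq ?_)
    have hpn : (pool.card : ℝ) ≠ 0 := ne_of_gt hpoolRpos
    have hbn : (B.card : ℝ) ≠ 0 := ne_of_gt hBRpos
    field_simp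

  refine hmain.trans ?_
  show 2 * μ * ‖z j₀‖ + 2 * μ * Z1 / (pool.card : ℝ)
      ≤ 2 * μ * (‖z j₀‖ + Z1 / ((C:ℝ) - k))
  rw [mul_add]
  refine add_le_add (le_refl _) ?_
  rw [mul_div_assoc]
  refine mul_le_mul_of_nonneg_left ?_ (by linarith [hμ0])
  gcongr




theorem part2 (hk : 2 ≤ k) (hkC : 2 * k ≤ C) (z : Fin k → ℂ) (μ : ℝ) (hμ0 : 0 ≤ μ)
    (c : ℕ → ℝ)
    (hc : ∀ ℓ, c ℓ = 2 * μ *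
      ((if h : ℓ - 1 < k then ‖z ⟨ℓ - 1, h⟩‖ else 0) +
        (if h : ℓ < k then ‖z ⟨ℓ, h⟩‖ else 0) +
        (∑ j, ‖z j‖) / ((C : ℝ) - k))) :
    ∑ ℓ ∈ Finset.Icc 1 (k - 1), c ℓ ^ 2 ≤ 36 * μ ^ 2 * ∑ j, ‖z j‖ ^ 2 := by
  classical
  set Z1 : ℝ := ∑ j, ‖z j‖ with hZ1
  set Z2 : ℝ := ∑ j, ‖z j‖ ^ 2 with hZ2
  have hZ2nn : 0 ≤ Z2 := Finset.sum_nonneg fun j _ => sq_nonneg _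
  have hCk : (0:ℝ) < (C:ℝ) - k := by
    have h1 : k + 2 ≤ C := by omega
    have h2 : (k:ℝ) + 2 ≤ C := by exact_mod_cast h1
    linarith
  have hkC' : (k:ℝ) ≤ (C:ℝ) - k := by
    have h1 : (2*k : ℕ) ≤ C := hkC
    have h2 : ((2*k : ℕ):ℝ) ≤ C := by exact_mod_cast h1
    push_cast at h2
    linarith
  set s : ℝ := Z1 / ((C:ℝ) - k) with hs
  have hsnn : 0 ≤ s := by
    apply div_nonneg _ (le_of_lt hCk)
    exact Finset.sum_nonneg fun j _ => norm_nonneg _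
  -- pointwise bound
  set ι : ℕ → Fin k := fun ℓ => if h : ℓ - 1 < k then ⟨ℓ-1, h⟩ else ⟨0, by omega⟩ with hι
  set ι' : ℕ → Fin k := fun ℓ => if h : ℓ < k then ⟨ℓ, h⟩ else ⟨0, by omega⟩ with hι'
  have hper : ∀ ℓ ∈ Finset.Icc 1 (k-1), c ℓ ^ 2 ≤
      12 * μ^2 * (‖z (ι ℓ)‖^2 + ‖z (ι' ℓ)‖^2 + s^2) := by
    intro ℓ hℓ
    rw [Finset.mem_Icc] at hℓ
    have h1 : ℓ - 1 < k := by omega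
    have h2 : ℓ < k := by omega
    rw [hc ℓ, dif_pos h1, dif_pos h2]
    have e1 : z ⟨ℓ-1, h1⟩ = z (ι ℓ) := by rw [hι]; simp [dif_pos h1]
    have e2 : z ⟨ℓ, h2⟩ = z (ι' ℓ) := by rw [hι']; simp [dif_pos h2]
    rw [e1, e2]
    have key : (‖z (ι ℓ)‖ + ‖z (ι' ℓ)‖ + s)^2 ≤ 3 * (‖z (ι ℓ)‖^2 + ‖z (ι' ℓ)‖^2 + s^2) := by
      nlinarith [sq_nonneg (‖z (ι ℓ)‖ - ‖z (ι' ℓ)‖), sq_nonneg (‖z (ι ℓ)‖ - s),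
        sq_nonneg (‖z (ι' ℓ)‖ - s)]
    calc (2 * μ * (‖z (ι ℓ)‖ + ‖z (ι' ℓ)‖ + s))^2
        = 4 * μ^2 * (‖z (ι ℓ)‖ + ‖z (ι' ℓ)‖ + s)^2 := by ring
      _ ≤ 4 * μ^2 * (3 * (‖z (ι ℓ)‖^2 + ‖z (ι' ℓ)‖^2 + s^2)) := by
          refine mul_le_mul_of_nonneg_left key ?_
          positivity
      _ = 12 * μ^2 * (‖z (ι ℓ)‖^2 + ‖z (ι' ℓ)‖^2 + s^2) := by ring
  refine (Finset.sum_le_sum hper).trans ?_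
  have hsum1 : ∑ ℓ ∈ Finset.Icc 1 (k-1), ‖z (ι ℓ)‖^2 ≤ Z2 := by
    have hinj : ∀ a ∈ Finset.Icc 1 (k-1), ∀ b ∈ Finset.Icc 1 (k-1), ι a = ι b → a = b := by
      intro a ha b hb hab
      rw [Finset.mem_Icc] at ha hb
      rw [hι] at hab
      simp only [dif_pos (show a - 1 < k by omega), dif_pos (show b - 1 < k by omega)] at hab
      have := congrArg Fin.val hab
      simp at this
      omega
    have him := Finset.sum_image (f := fun j : Fin k => ‖z j‖^2) (g := ι) hinj
    rw [← him]
    refine Finset.sum_le_sum_of_subset_of_nonneg (Finset.subset_univ _) ?_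
    intro j _ _; positivity
  have hsum2 : ∑ ℓ ∈ Finset.Icc 1 (k-1), ‖z (ι' ℓ)‖^2 ≤ Z2 := by
    have hinj : ∀ a ∈ Finset.Icc 1 (k-1), ∀ b ∈ Finset.Icc 1 (k-1), ι' a = ι' b → a = b := by
      intro a ha b hb hab
      rw [Finset.mem_Icc] at ha hb
      rw [hι'] at hab
      simp only [dif_pos (show a < k by omega), dif_pos (show b < k by omega)] at hab
      have := congrArg Fin.val hab
      simp at this
      omega
    have him := Finset.sum_image (f := fun j : Fin k => ‖z j‖^2) (g := ι') hinj
    rw [← him]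
    refine Finset.sum_le_sum_of_subset_of_nonneg (Finset.subset_univ _) ?_
    intro j _ _; positivity
  have hsum3 : ∑ ℓ ∈ Finset.Icc 1 (k-1), s^2 ≤ Z2 := by
    rw [Finset.sum_const, Nat.card_Icc, nsmul_eq_mul]
    have hcard : ((k - 1 + 1 - 1 : ℕ) : ℝ) ≤ (k : ℝ) - 1 := by
      have : (k - 1 + 1 - 1 : ℕ) = k - 1 := by omega
      rw [this]
      have h2 : ((k-1 : ℕ) : ℝ) = (k:ℝ) - 1 := by
        have : (1:ℕ) ≤ k := by omega
        push_cast [this]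
        ring
      rw [h2]
    have hZ12 : Z1^2 ≤ k * Z2 := by
      have := sq_sum_le_card_mul_sum_sq (s := (univ : Finset (Fin k))) (f := fun j => ‖z j‖)
      simpa using this
    have hs2 : s^2 = Z1^2 / ((C:ℝ)-k)^2 := by
      rw [hs, div_pow]
    have hineq : ((k:ℝ) - 1) * (Z1^2 / ((C:ℝ)-k)^2) ≤ Z2 := by
      rw [div_eq_mul_inv, ← mul_assoc]
      have hk1 : (1:ℝ) ≤ (k:ℝ) := by
        have : (1:ℕ) ≤ k := by omega
        exact_mod_cast this
      have hCk2 : (k:ℝ) * ((k:ℝ) - 1) ≤ ((C:ℝ)-k)^2 := by nlinarith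
      rw [mul_inv_le_iff₀ (by positivity)]
      nlinarith [hZ12, hZ2nn]
    calc ((k - 1 + 1 - 1 : ℕ) : ℝ) * s^2 ≤ ((k:ℝ) - 1) * s^2 := by
          refine mul_le_mul_of_nonneg_right hcard (by positivity)
      _ = ((k:ℝ) - 1) * (Z1^2 / ((C:ℝ)-k)^2) := by rw [hs2]
      _ ≤ Z2 := hineq
  calc ∑ ℓ ∈ Finset.Icc 1 (k-1), 12 * μ^2 * (‖z (ι ℓ)‖^2 + ‖z (ι' ℓ)‖^2 + s^2)
      = 12 * μ^2 * ((∑ ℓ ∈ Finset.Icc 1 (k-1), ‖z (ι ℓ)‖^2)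
        + (∑ ℓ ∈ Finset.Icc 1 (k-1), ‖z (ι' ℓ)‖^2) + (∑ ℓ ∈ Finset.Icc 1 (k-1), s^2)) := by
        rw [← Finset.mul_sum]
        congr 1
        rw [← Finset.sum_add_distrib, ← Finset.sum_add_distrib]
    _ ≤ 12 * μ^2 * (Z2 + Z2 + Z2) := by
        refine mul_le_mul_of_nonneg_left ?_ (by positivity)
        exact add_le_add (add_le_add hsum1 hsum2) hsum3
    _ = 36 * μ^2 * Z2 := by ring


/-- The Doob martingale `M_ℓ = E[∑_{j≠i} z_j ⟨φ_{i'}, φ_{π_j}⟩ | π^{−i}_{1→ℓ}, π_i = i']`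
has differences bounded by `c_ℓ = 2μ(|z_ℓ| + |z_{ℓ+1}| + ‖z‖₁/(C−k))`, and
`∑_{ℓ=1}^{k−1} c_ℓ² ≤ 36 μ² ‖z‖₂²`. -/
theorem stmt7 {N C k : ℕ} (hk : 2 ≤ k) (hkC : 2 * k ≤ C)
    [Nonempty {f : Fin k → Fin C // Function.Injective f}]
    (Φ : Matrix (Fin N) (Fin C) ℂ) (hunit : ∀ i : Fin C, colIP Φ i i = 1)
    (i : Fin k) (i' : Fin C) (z : Fin k → ℂ)
    (μc : Measure {f : Fin k → Fin C // Function.Injective f})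
    (hμc : μc =
      (PMF.uniformOfFintype {f : Fin k → Fin C // Function.Injective f}).toMeasure[|
        {f : {f : Fin k → Fin C // Function.Injective f} | f.1 i = i'}])
    (M : ℕ → {f : Fin k → Fin C // Function.Injective f} → ℂ)
    (hM : ∀ ℓ, M ℓ =
      μc[fun ω => ∑ j ∈ Finset.univ.filter (fun j => j ≠ i), z j * colIP Φ i' (ω.1 j)|
        remFiltration k C i ℓ])
    (c : ℕ → ℝ)
    (hc : ∀ ℓ, c ℓ = 2 * wcoh Φ *
      ((if h : ℓ - 1 < k then ‖z ⟨ℓ - 1, h⟩‖ else 0) +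
        (if h : ℓ < k then ‖z ⟨ℓ, h⟩‖ else 0) +
        (∑ j, ‖z j‖) / ((C : ℝ) - k))) :
    (∀ ℓ, 1 ≤ ℓ → ℓ ≤ k - 1 → ∀ᵐ ω ∂μc, ‖M ℓ ω - M (ℓ - 1) ω‖ ≤ c ℓ) ∧
      ∑ ℓ ∈ Finset.Icc 1 (k - 1), c ℓ ^ 2 ≤ 36 * wcoh Φ ^ 2 * ∑ j, ‖z j‖ ^ 2 := by
  classical
  constructor
  · intro ℓ hℓ1 hℓ2
    have hFfun : (fun ω : OmF k C => ∑ j ∈ Finset.univ.filter (fun j => j ≠ i),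
        z j * colIP Φ i' (ω.1 j)) = Ffun Φ i i' z := rfl
    have hG1 := Gfun_eq_condexp Φ i i' z μc hμc ℓ
    have hG0 := Gfun_eq_condexp Φ i i' z μc hμc (ℓ-1)
    have hSae := ae_mem_S i i' μc hμc
    rw [hM ℓ, hM (ℓ-1), hFfun]
    filter_upwards [hG1, hG0, hSae] with ω e1 e0 hωS
    rw [← e1, ← e0]
    have hmlt : ℓ - 1 < k - 1 := by omega
    have hbnd := Gdiff_bound hk hkC Φ i i' z ω hωS ℓ hℓ1 hℓ2
    rw [hc ℓ]
    refine hbnd.trans ?_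
    have h2w : 0 ≤ 2 * wcoh Φ := by linarith [wcoh_nonneg Φ]
    refine mul_le_mul_of_nonneg_left ?_ h2w
    refine add_le_add ?_ (le_refl _)
    have h1 : ℓ - 1 < k := by omega
    have h2 : ℓ < k := by omega
    rw [dif_pos h1, dif_pos h2]
    rcases rem_val i (⟨ℓ-1, by omega⟩ : Fin (k-1)) with h | h
    · have he : rem i (⟨ℓ-1, by omega⟩ : Fin (k-1)) = ⟨ℓ-1, h1⟩ := by
        apply Fin.ext
        rw [h]
      rw [he]
      have := norm_nonneg (z ⟨ℓ, h2⟩)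
      linarith
    · have he : rem i (⟨ℓ-1, by omega⟩ : Fin (k-1)) = ⟨ℓ, h2⟩ := by
        apply Fin.ext
        rw [h]
        simp
        omega
      rw [he]
      have := norm_nonneg (z ⟨ℓ-1, h1⟩)
      linarith
  · exact part2 hk hkC z (wcoh Φ) (wcoh_nonneg Φ) c hc
end

section
/- (OST success probability, Lemma 1) Let Π = supp(α) be a uniformly random k-subset of {1,…,C}, suppose Φ satisfies the (k,ε,δ)-StOC, and let the noise η ~ CN(0,σ²I) be independent of Π. Choose threshold λ = 2 max{ε, 2√(σ² log C)} and assume α_min > 2λ and ‖α‖_2 = 1. Then the OST estimate Ŝ = {i : |(Φᴴ(Φα+η))_i| > λ} satisfies Pr(Ŝ ≠ Π) ≤ δ + 2(√(2π log C) · C)^{−1}. -/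
open Finset

open MeasureTheory ProbabilityTheory

/-- The circularly-symmetric complex Gaussian measure `CN(0, v)` on `ℂ`. -/
noncomputable def complexGaussian (v : NNReal) : Measure ℂ :=
  ((gaussianReal 0 (v / 2)).prod (gaussianReal 0 (v / 2))).map
    (fun p => (p.1 : ℂ) + p.2 * Complex.I)



section AuxOST
open Real Filter Set

lemma gauss_pdf_conv (v1 v2 : NNReal) (h1 : v1 ≠ 0) (h2 : v2 ≠ 0) (x y : ℝ) :
    gaussianPDFReal 0 v1 x * gaussianPDFReal 0 v2 (y - x) =
      gaussianPDFReal 0 (v1 + v2) y *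
        gaussianPDFReal ((v1 : ℝ) * y / (v1 + v2)) (NNReal.mk (v1 * v2 / (v1 + v2)) (by positivity)) x := by
  have hv1 : (0:ℝ) < v1 := lt_of_le_of_ne v1.coe_nonneg (by exact_mod_cast h1.symm)
  have hv2 : (0:ℝ) < v2 := lt_of_le_of_ne v2.coe_nonneg (by exact_mod_cast h2.symm)
  have hs : (0:ℝ) < v1 + v2 := by positivity
  simp only [gaussianPDFReal, NNReal.coe_mk, NNReal.coe_add, sub_zero]
  have key : ∀ a b c d : ℝ, a * b * (c * d) = a * c * (b * d) := fun a b c d => by ring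
  rw [key, key ((√(2 * π * ((v1:ℝ) + v2)))⁻¹), ← Real.exp_add, ← Real.exp_add]
  congr 1
  · rw [← mul_inv, ← mul_inv, ← Real.sqrt_mul (by positivity), ← Real.sqrt_mul (by positivity)]
    congr 2
    field_simp
  · congr 1
    field_simp
    ring

lemma gauss_conv (v1 v2 : NNReal) :
    ((gaussianReal 0 v1).prod (gaussianReal 0 v2)).map (fun p : ℝ × ℝ => p.1 + p.2) =
      gaussianReal 0 (v1 + v2) := by
  by_cases h1 : v1 = 0
  · subst h1
    rw [gaussianReal_zero_var, Measure.dirac_prod, Measure.map_map (by fun_prop) (by fun_prop)]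
    have : ((fun p : ℝ × ℝ => p.1 + p.2) ∘ Prod.mk (0:ℝ)) = (fun y : ℝ => (0:ℝ) + y) := rfl
    rw [this, gaussianReal_map_const_add (μ := 0) (v := v2) 0]
    norm_num
  by_cases h2 : v2 = 0
  · subst h2
    rw [gaussianReal_zero_var, Measure.prod_dirac, Measure.map_map (by fun_prop) (by fun_prop)]
    have : ((fun p : ℝ × ℝ => p.1 + p.2) ∘ (fun x : ℝ => (x, (0:ℝ)))) = (fun y : ℝ => y + (0:ℝ)) := rfl
    rw [this, gaussianReal_map_add_const (μ := 0) (v := v1) 0]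
    norm_num
  ext s hs
  rw [Measure.map_apply (by fun_prop) hs,
    Measure.prod_apply (hs.preimage (by fun_prop))]
  have inner : ∀ x : ℝ, (gaussianReal 0 v2) (Prod.mk x ⁻¹' ((fun p : ℝ × ℝ => p.1 + p.2) ⁻¹' s))
      = ∫⁻ y in s, gaussianPDF x v2 y := by
    intro x
    have : Prod.mk x ⁻¹' ((fun p : ℝ × ℝ => p.1 + p.2) ⁻¹' s) = (fun y => x + y) ⁻¹' s := rfl
    rw [this, ← Measure.map_apply (by fun_prop) hs, gaussianReal_map_const_add (μ := 0) x,
      zero_add, gaussianReal_apply _ h2 s]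
  simp_rw [inner]
  have hmeas : Measurable (fun q : ℝ × ℝ => gaussianPDF q.1 v2 q.2) := by
    simp only [gaussianPDF, gaussianPDFReal]
    fun_prop
  rw [gaussianReal_of_var_ne_zero 0 h1,
    lintegral_withDensity_eq_lintegral_mul _ (measurable_gaussianPDF 0 v1)
      (Measurable.lintegral_prod_right (f := fun x y => gaussianPDF x v2 y) hmeas)]
  simp only [Pi.mul_apply]
  have step : ∀ a : ℝ, gaussianPDF 0 v1 a * ∫⁻ y in s, gaussianPDF a v2 y
      = ∫⁻ y in s, gaussianPDF 0 v1 a * gaussianPDF a v2 y := fun a =>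
    (lintegral_const_mul' _ _ ENNReal.ofReal_ne_top).symm
  simp_rw [step]
  rw [lintegral_lintegral_swap]
  · rw [gaussianReal_apply 0 (by simp [h1, h2]) s]
    refine setLIntegral_congr_fun_ae hs (Filter.Eventually.of_forall fun y _ => ?_)
    have ptwise : ∀ x : ℝ, gaussianPDF 0 v1 x * gaussianPDF x v2 y =
        gaussianPDF 0 (v1 + v2) y *
          gaussianPDF ((v1 : ℝ) * y / (v1 + v2)) (NNReal.mk (v1 * v2 / (v1 + v2)) (by positivity)) x := by
      intro x
      simp only [gaussianPDF]
      rw [← ENNReal.ofReal_mul (gaussianPDFReal_nonneg _ _ _),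
        ← ENNReal.ofReal_mul (gaussianPDFReal_nonneg _ _ _)]
      congr 1
      have : gaussianPDFReal x v2 y = gaussianPDFReal 0 v2 (y - x) := by
        simp [gaussianPDFReal]
      rw [this]
      exact gauss_pdf_conv v1 v2 h1 h2 x y
    simp_rw [ptwise]
    rw [lintegral_const_mul _ (measurable_gaussianPDF _ _),
      lintegral_gaussianPDF_eq_one _ (by
        have hv1 : (0:ℝ) < v1 := lt_of_le_of_ne v1.coe_nonneg (by exact_mod_cast (Ne.symm h1))
        have hv2 : (0:ℝ) < v2 := lt_of_le_of_ne v2.coe_nonneg (by exact_mod_cast (Ne.symm h2))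
        intro hcon
        rw [← NNReal.coe_inj] at hcon
        simp only [NNReal.coe_mk, NNReal.coe_zero] at hcon
        have : (0:ℝ) < v1 * v2 / (v1 + v2) := by positivity
        linarith), mul_one]
  · exact (((measurable_gaussianPDF 0 v1).comp measurable_fst).mul hmeas).aemeasurable

lemma gauss_add {α β : Type*} [MeasurableSpace α] [MeasurableSpace β]
    (μ : Measure α) (ν : Measure β) [SFinite μ] [SFinite ν]
    {f : α → ℝ} {g : β → ℝ} (hf : Measurable f) (hg : Measurable g)
    {w1 w2 : NNReal} (h1 : μ.map f = gaussianReal 0 w1) (h2 : ν.map g = gaussianReal 0 w2) :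
    (μ.prod ν).map (fun p => f p.1 + g p.2) = gaussianReal 0 (w1 + w2) := by
  have : (fun p : α × β => f p.1 + g p.2) = (fun p : ℝ × ℝ => p.1 + p.2) ∘ Prod.map f g := rfl
  rw [this, ← Measure.map_map (by fun_prop) (by fun_prop),
    ← Measure.map_prod_map _ _ hf hg, h1, h2, gauss_conv]

lemma gauss_pair (v : NNReal) (a b : ℝ) :
    (((gaussianReal 0 v).prod (gaussianReal 0 v)).map
        (fun p : ℝ × ℝ => a * p.1 + b * p.2)) =
      gaussianReal 0 (NNReal.mk (a ^ 2 + b ^ 2) (by positivity) * v) := by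
  have ha : (gaussianReal 0 v).map (fun x => a * x) = gaussianReal 0 (NNReal.mk (a ^ 2) (sq_nonneg a) * v) := by
    simpa using gaussianReal_map_const_mul (μ := 0) (v := v) a
  have hb : (gaussianReal 0 v).map (fun x => b * x) = gaussianReal 0 (NNReal.mk (b ^ 2) (sq_nonneg b) * v) := by
    simpa using gaussianReal_map_const_mul (μ := 0) (v := v) b
  rw [gauss_add (f := fun x => a * x) (g := fun x => b * x) _ _
      (measurable_const_mul a) (measurable_const_mul b) ha hb]
  congr 1
  ext
  push_cast
  ring

lemma gauss_pi (v : NNReal) : ∀ (N : ℕ) (a b : Fin N → ℝ),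
    ((Measure.pi fun _ : Fin N => (gaussianReal 0 v).prod (gaussianReal 0 v)).map
        (fun x => ∑ n, (a n * (x n).1 + b n * (x n).2))) =
      gaussianReal 0 (NNReal.mk (∑ n, (a n ^ 2 + b n ^ 2)) (by positivity) * v) := by
  intro N
  induction N with
  | zero =>
      intro a b
      have : (fun x : Fin 0 → ℝ × ℝ => ∑ n, (a n * (x n).1 + b n * (x n).2)) =
          fun _ => (0:ℝ) := by ext x; simp
      rw [this, Measure.map_const]
      simp only [measure_univ, one_smul]
      have : (NNReal.mk (∑ n : Fin 0, (a n ^ 2 + b n ^ 2)) (by positivity) * v : NNReal) = 0 := by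
        ext; simp
      rw [this, gaussianReal_zero_var]
  | succ n ih =>
      intro a b
      have hmp := measurePreserving_piFinSuccAbove
        (fun _ : Fin (n+1) => (gaussianReal 0 v).prod (gaussianReal 0 v)) 0
      have hF : Measurable (fun x : Fin (n+1) → ℝ × ℝ =>
          ∑ m, (a m * (x m).1 + b m * (x m).2)) := by fun_prop
      rw [← (hmp.symm _).map_eq, Measure.map_map hF (MeasurableEquiv.measurable _)]
      have hcomp : ((fun x : Fin (n+1) → ℝ × ℝ => ∑ m, (a m * (x m).1 + b m * (x m).2)) ∘
          (MeasurableEquiv.piFinSuccAbove (fun _ => ℝ × ℝ) 0).symm) =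
          fun p : (ℝ × ℝ) × (Fin n → ℝ × ℝ) =>
            (a 0 * p.1.1 + b 0 * p.1.2) +
              ∑ m : Fin n, (a m.succ * (p.2 m).1 + b m.succ * (p.2 m).2) := by
        ext p
        simp only [Function.comp_apply]
        rw [Fin.sum_univ_succ]
        simp [MeasurableEquiv.piFinSuccAbove, Fin.succAbove]
      rw [hcomp, gauss_add _ _ (by fun_prop) (by fun_prop)
        (gauss_pair v (a 0) (b 0)) (ih (fun m => a m.succ) (fun m => b m.succ))]
      congr 1
      ext
      push_cast
      rw [Fin.sum_univ_succ]
      ring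

lemma xexp_int (v : NNReal) (hv : (0:ℝ) < v) (s : ℝ) (hs : 0 < s) :
    IntegrableOn (fun x => x * Real.exp (-x^2 / (2*v))) (Ioi s) ∧
    ∫ x in Ioi s, x * Real.exp (-x^2 / (2*v)) = v * Real.exp (-s^2 / (2*v)) := by
  have hderiv : ∀ x ∈ Ici s, HasDerivAt (fun x => -(v:ℝ) * Real.exp (-x^2 / (2*v)))
      (x * Real.exp (-x^2 / (2*v))) x := by
    intro x _
    have h1 : HasDerivAt (fun x : ℝ => -x^2 / (2*v)) (-x / v) x := by
      have := ((hasDerivAt_pow 2 x).neg).div_const (2*(v:ℝ))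
      refine this.congr_deriv ?_
      field_simp
      ring
    have := ((Real.hasDerivAt_exp _).comp x h1).const_mul (-(v:ℝ))
    refine this.congr_deriv ?_
    field_simp
  have hpos : ∀ x ∈ Ioi s, 0 ≤ x * Real.exp (-x^2 / (2*v)) := fun x hx =>
    mul_nonneg (le_of_lt (hs.trans hx)) (Real.exp_nonneg _)
  have htend : Tendsto (fun x => -(v:ℝ) * Real.exp (-x^2 / (2*v))) atTop (nhds 0) := by
    rw [show (0:ℝ) = -(v:ℝ) * 0 by ring]
    refine Tendsto.const_mul _ (Real.tendsto_exp_atBot.comp ?_)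
    apply Tendsto.atBot_div_const (by positivity)
    exact tendsto_neg_atBot_iff.mpr (tendsto_pow_atTop (by norm_num))
  refine ⟨integrableOn_Ioi_deriv_of_nonneg' hderiv hpos htend, ?_⟩
  rw [integral_Ioi_of_hasDerivAt_of_nonneg' hderiv hpos htend]
  ring

lemma gauss_tail (v : NNReal) (hv : v ≠ 0) (s : ℝ) (hs : 0 < s) :
    gaussianReal 0 v (Ioi s) ≤
      ENNReal.ofReal (Real.sqrt v / (s * Real.sqrt (2*π)) * Real.exp (-s^2 / (2*(v:ℝ)))) := by
  have hv' : (0:ℝ) < v := lt_of_le_of_ne v.coe_nonneg (by exact_mod_cast hv.symm)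
  rw [gaussianReal_apply_eq_integral _ hv]
  apply ENNReal.ofReal_le_ofReal
  obtain ⟨hint, hval⟩ := xexp_int v hv' s hs
  have hc : (0:ℝ) < Real.sqrt (2*π*v) := Real.sqrt_pos.mpr (by positivity)
  have hmono : ∫ x in Ioi s, gaussianPDFReal 0 v x ≤
      ∫ x in Ioi s, (x / s) * gaussianPDFReal 0 v x := by
    refine setIntegral_mono_on (integrable_gaussianPDFReal 0 v).integrableOn ?_
      measurableSet_Ioi ?_
    · have : (fun x => (x / s) * gaussianPDFReal 0 v x) =
          fun x => (Real.sqrt (2*π*v))⁻¹ / s * (x * Real.exp (-x^2 / (2*v))) := by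
        ext x
        simp only [gaussianPDFReal, sub_zero]
        ring
      rw [this]
      exact hint.const_mul _
    · intro x hx
      nth_rewrite 1 [show gaussianPDFReal 0 v x = 1 * gaussianPDFReal 0 v x from (one_mul _).symm]
      apply mul_le_mul_of_nonneg_right _ (gaussianPDFReal_nonneg _ _ _)
      rw [le_div_iff₀ hs]
      simpa using (hx.out.le)
  refine hmono.trans (le_of_eq ?_)
  have : (fun x => (x / s) * gaussianPDFReal 0 v x) =
      fun x => (Real.sqrt (2*π*v))⁻¹ / s * (x * Real.exp (-x^2 / (2*v))) := by
    ext x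
    simp only [gaussianPDFReal, sub_zero]
    ring
  rw [this, integral_const_mul, hval, Real.sqrt_mul (by positivity) (v:ℝ), ← mul_assoc]
  have hsv : Real.sqrt v * Real.sqrt v = (v:ℝ) := Real.mul_self_sqrt hv'.le
  have h2 : (0:ℝ) < Real.sqrt (2*π) := Real.sqrt_pos.mpr (by positivity)
  have h3 : (0:ℝ) < Real.sqrt v := Real.sqrt_pos.mpr hv'
  have key : ((Real.sqrt (2*π) * Real.sqrt v)⁻¹) / s * (v:ℝ) =
      Real.sqrt v / (s * Real.sqrt (2*π)) := by
    rw [← hsv]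
    field_simp
    rw [Real.sqrt_sq h3.le]
  rw [key]

lemma gauss_neg (v : NNReal) (s : ℝ) :
    gaussianReal 0 v (Iio (-s)) = gaussianReal 0 v (Ioi s) := by
  have h1 : (NNReal.mk ((-1:ℝ)^2) (sq_nonneg _) * v : NNReal) = v := by
    ext; norm_num
  have h : (gaussianReal 0 v).map (fun x => (-1:ℝ) * x) = gaussianReal 0 v := by
    rw [gaussianReal_map_const_mul (μ := 0) (v := v) (-1), h1, mul_zero]
  conv_lhs => rw [← h]
  rw [Measure.map_apply (by fun_prop) measurableSet_Iio]
  congr 1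
  ext x
  simp only [Set.mem_preimage, Set.mem_Iio, Set.mem_Ioi]
  constructor <;> intro <;> linarith

instance complexGaussian_prob (v : NNReal) : IsProbabilityMeasure (complexGaussian v) :=
  Measure.isProbabilityMeasure_map (Measurable.aemeasurable (by fun_prop))

lemma noise_bound {N C : ℕ} (hC : 2 ≤ C) (Φ : Matrix (Fin N) (Fin C) ℂ)
    (hunit : ∀ i : Fin C, colIP Φ i i = 1) (σ2 : NNReal) (hσ : 0 < σ2) :
    (Measure.pi fun _ : Fin N => complexGaussian σ2)
      {η : Fin N → ℂ | ∃ i : Fin C,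
        2 * Real.sqrt ((σ2:ℝ) * Real.log C) < ‖∑ n, (starRingEnd ℂ) (Φ n i) * η n‖} ≤
      ENNReal.ofReal (2 / (Real.sqrt (2 * Real.pi * Real.log C) * C)) := by
  have hC1 : (1:ℝ) < C := by
    have : (2:ℝ) ≤ C := by exact_mod_cast hC
    linarith
  have hC0 : (0:ℝ) < C := by linarith
  have hlogC : 0 < Real.log C := Real.log_pos hC1
  have hσ2 : (0:ℝ) < σ2 := hσ
  set t := 2 * Real.sqrt ((σ2:ℝ) * Real.log C) with ht
  set s0 := Real.sqrt 2 * Real.sqrt ((σ2:ℝ) * Real.log C) with hs0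
  have hs0pos : 0 < s0 := by positivity
  have hts0 : t = Real.sqrt 2 * s0 := by
    rw [hs0, ht, ← mul_assoc, ← Real.sqrt_mul_self (by norm_num : (0:ℝ) ≤ 2)]
    norm_num
  set g : Measure ℝ := gaussianReal 0 (σ2 / 2) with hg
  set P : Measure (Fin N → ℝ × ℝ) := Measure.pi fun _ : Fin N => g.prod g with hP
  set T : (Fin N → ℝ × ℝ) → (Fin N → ℂ) :=
    fun x n => ((x n).1 : ℂ) + (x n).2 * Complex.I with hTdef
  have hTmeas : Measurable T := by
    refine measurable_pi_iff.mpr fun n => ?_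
    fun_prop
  have hT : MeasurePreserving T P (Measure.pi fun _ : Fin N => complexGaussian σ2) :=
    measurePreserving_pi (fun _ : Fin N => g.prod g) (fun _ : Fin N => complexGaussian σ2)
      (fun i => ⟨by fun_prop, rfl⟩)
  -- the four half-space events
  set a : Fin C → Fin N → ℝ := fun i n => (Φ n i).re with ha
  set b : Fin C → Fin N → ℝ := fun i n => (Φ n i).im with hb
  set F : Fin C → (Fin N → ℝ × ℝ) → ℝ :=
    fun i x => ∑ n, (a i n * (x n).1 + b i n * (x n).2) with hF
  set G : Fin C → (Fin N → ℝ × ℝ) → ℝ :=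
    fun i x => ∑ n, ((-(b i n)) * (x n).1 + a i n * (x n).2) with hG
  have hRe : ∀ i x, (∑ n, (starRingEnd ℂ) (Φ n i) * T x n).re = F i x := by
    intro i x
    rw [Complex.re_sum]
    refine Finset.sum_congr rfl fun n _ => ?_
    simp only [Complex.mul_re, Complex.mul_im, Complex.add_re, Complex.add_im, Complex.ofReal_re, Complex.ofReal_im, Complex.I_re, Complex.I_im, Complex.conj_re, Complex.conj_im, ha, hb, hTdef]
    ring
  have hIm : ∀ i x, (∑ n, (starRingEnd ℂ) (Φ n i) * T x n).im = G i x := by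
    intro i x
    rw [Complex.im_sum]
    refine Finset.sum_congr rfl fun n _ => ?_
    simp only [Complex.mul_re, Complex.mul_im, Complex.add_re, Complex.add_im, Complex.ofReal_re, Complex.ofReal_im, Complex.I_re, Complex.I_im, Complex.conj_re, Complex.conj_im, ha, hb, hTdef]
    ring
  have hva : ∀ i, ∑ n, (a i n ^ 2 + b i n ^ 2) = 1 := by
    intro i
    have h := congrArg Complex.re (hunit i)
    rw [colIP, Complex.re_sum] at h
    simp only [Complex.one_re] at h
    rw [← h]
    refine Finset.sum_congr rfl fun n _ => ?_
    simp only [Complex.mul_re, Complex.mul_im, Complex.add_re, Complex.add_im, Complex.ofReal_re, Complex.ofReal_im, Complex.I_re, Complex.I_im, Complex.conj_re, Complex.conj_im, ha, hb]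
    ring
  have hvb : ∀ i, ∑ n, (b i n ^ 2 + a i n ^ 2) = 1 := by
    intro i
    rw [← hva i]
    exact Finset.sum_congr rfl fun n _ => by ring
  have hσ2half : (σ2 / 2 : NNReal) ≠ 0 := by
    simp only [ne_eq, div_eq_zero_iff]
    push_neg
    exact ⟨fun h => absurd h hσ.ne', by norm_num⟩
  -- law of F i and G i
  have hlawF : ∀ i, P.map (F i) = g := by
    intro i
    rw [hP, hF, gauss_pi]
    congr 1
    rw [show (NNReal.mk (∑ n, (a i n ^ 2 + b i n ^ 2)) (by positivity) : NNReal) = 1 by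
      ext; simp [hva i], one_mul]
  have hlawG : ∀ i, P.map (G i) = g := by
    intro i
    rw [hP, hG, gauss_pi]
    congr 1
    rw [show (NNReal.mk (∑ n, ((-(b i n)) ^ 2 + a i n ^ 2)) (by positivity) : NNReal) = 1 by
      ext; simpa using hvb i, one_mul]
  have hFmeas : ∀ i, Measurable (F i) := fun i => by fun_prop
  have hGmeas : ∀ i, Measurable (G i) := fun i => by fun_prop
  -- tail bound value
  set r0 := Real.sqrt ((σ2:ℝ)/2) / (s0 * Real.sqrt (2*π)) * Real.exp (-s0^2 / (2*((σ2:ℝ)/2)))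
    with hr0
  have hr0nonneg : 0 ≤ r0 := by positivity
  have htail : ∀ (H : (Fin N → ℝ × ℝ) → ℝ), Measurable H → P.map H = g →
      P {x | s0 < H x} ≤ ENNReal.ofReal r0 := by
    intro H hHm hHlaw
    have : {x | s0 < H x} = H ⁻¹' (Ioi s0) := rfl
    rw [this, ← Measure.map_apply hHm measurableSet_Ioi, hHlaw, hg]
    refine (gauss_tail (σ2/2) hσ2half s0 hs0pos).trans (le_of_eq ?_)
    rw [hr0]
    norm_num
  have htail' : ∀ (H : (Fin N → ℝ × ℝ) → ℝ), Measurable H → P.map H = g →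
      P {x | H x < -s0} ≤ ENNReal.ofReal r0 := by
    intro H hHm hHlaw
    have : {x | H x < -s0} = H ⁻¹' (Iio (-s0)) := rfl
    rw [this, ← Measure.map_apply hHm measurableSet_Iio, hHlaw, hg, gauss_neg]
    refine (gauss_tail (σ2/2) hσ2half s0 hs0pos).trans (le_of_eq ?_)
    rw [hr0]
    norm_num
  -- B and its preimage
  set B : Set (Fin N → ℂ) :=
    {η : Fin N → ℂ | ∃ i : Fin C, t < ‖∑ n, (starRingEnd ℂ) (Φ n i) * η n‖} with hB
  have hBmeas : MeasurableSet B := by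
    have : B = ⋃ i : Fin C,
        (fun η : Fin N → ℂ => ‖∑ n, (starRingEnd ℂ) (Φ n i) * η n‖) ⁻¹' (Ioi t) := by
      ext η; simp [hB]
    rw [this]
    refine MeasurableSet.iUnion fun i => ?_
    refine measurableSet_preimage ?_ measurableSet_Ioi
    fun_prop
  have hpre : T ⁻¹' B ⊆ ⋃ i : Fin C,
      ({x | s0 < F i x} ∪ {x | F i x < -s0} ∪ ({x | s0 < G i x} ∪ {x | G i x < -s0})) := by
    intro x hx
    obtain ⟨i, hi⟩ := hx
    refine Set.mem_iUnion.mpr ⟨i, ?_⟩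
    by_contra hcon
    simp only [Set.mem_union, Set.mem_setOf_eq, not_or, not_lt] at hcon
    obtain ⟨⟨h1, h2⟩, h3, h4⟩ := hcon
    have habsF : |F i x| ≤ s0 := abs_le.mpr ⟨by linarith, h1⟩
    have habsG : |G i x| ≤ s0 := abs_le.mpr ⟨by linarith, h3⟩
    have hnorm : ‖∑ n, (starRingEnd ℂ) (Φ n i) * T x n‖ ≤ t := by
      rw [Complex.norm_def, Complex.normSq_apply, hRe, hIm]
      rw [hts0]
      have h5 : F i x * F i x + G i x * G i x ≤ 2 * s0 ^ 2 := by
        nlinarith [abs_nonneg (F i x), abs_nonneg (G i x), sq_abs (F i x), sq_abs (G i x)]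
      refine (Real.sqrt_le_sqrt h5).trans (le_of_eq ?_)
      rw [show 2 * s0^2 = 2 * s0^2 from rfl, Real.sqrt_mul (by norm_num : (0:ℝ) ≤ 2) (s0^2),
        Real.sqrt_sq hs0pos.le]
    exact absurd hi (not_lt.mpr hnorm)
  -- assemble
  rw [← hT.measure_preimage hBmeas.nullMeasurableSet]
  refine (measure_mono hpre).trans ?_
  refine (measure_iUnion_le _).trans ?_
  have hbound : ∀ i : Fin C,
      P ({x | s0 < F i x} ∪ {x | F i x < -s0} ∪ ({x | s0 < G i x} ∪ {x | G i x < -s0})) ≤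
        ENNReal.ofReal (4 * r0) := by
    intro i
    refine (measure_union_le _ _).trans ?_
    have e1 := (measure_union_le {x | s0 < F i x} {x | F i x < -s0}).trans
      (add_le_add (htail _ (hFmeas i) (hlawF i)) (htail' _ (hFmeas i) (hlawF i)))
    have e2 := (measure_union_le {x | s0 < G i x} {x | G i x < -s0}).trans
      (add_le_add (htail _ (hGmeas i) (hlawG i)) (htail' _ (hGmeas i) (hlawG i)))
    refine (add_le_add e1 e2).trans (le_of_eq ?_)
    rw [← ENNReal.ofReal_add hr0nonneg hr0nonneg,
      ← ENNReal.ofReal_add (by positivity) (by positivity)]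
    congr 1
    ring
  refine (ENNReal.tsum_le_tsum hbound).trans ?_
  rw [tsum_fintype]
  simp only [Finset.sum_const, Finset.card_univ, Fintype.card_fin, nsmul_eq_mul]
  rw [← ENNReal.ofReal_natCast C, ← ENNReal.ofReal_mul (by positivity)]
  apply ENNReal.ofReal_le_ofReal
  -- real arithmetic
  have hexp : Real.exp (-s0^2 / (2*((σ2:ℝ)/2))) = ((C:ℝ)^2)⁻¹ := by
    have hs0sq : s0^2 = 2 * σ2 * Real.log C := by
      rw [hs0, mul_pow, Real.sq_sqrt (by norm_num : (0:ℝ) ≤ 2),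
        Real.sq_sqrt (by positivity)]
      ring
    have harg : -s0^2 / (2*((σ2:ℝ)/2)) = Real.log (((C:ℝ)^2)⁻¹) := by
      rw [Real.log_inv, Real.log_pow, hs0sq]
      push_cast
      field_simp
    rw [harg, Real.exp_log (by positivity)]
  have h22 : Real.sqrt 2 * Real.sqrt 2 = 2 := Real.mul_self_sqrt (by norm_num)
  have hcoef : Real.sqrt ((σ2:ℝ)/2) / (s0 * Real.sqrt (2*π)) =
      1 / (2 * Real.sqrt (2 * π * Real.log C)) := by
    rw [hs0, Real.sqrt_mul (le_of_lt hσ2) (Real.log C),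
      Real.sqrt_div (le_of_lt hσ2),
      Real.sqrt_mul (show (0:ℝ) ≤ 2*π by positivity) (Real.log C),
      Real.sqrt_mul (by norm_num : (0:ℝ) ≤ 2) π]
    have hl : (0:ℝ) < Real.sqrt (Real.log C) := Real.sqrt_pos.mpr hlogC
    have hss : (0:ℝ) < Real.sqrt (σ2:ℝ) := Real.sqrt_pos.mpr hσ2
    have hpp : (0:ℝ) < Real.sqrt (2*π) := Real.sqrt_pos.mpr (by positivity)
    have hs2 : (0:ℝ) < Real.sqrt 2 := Real.sqrt_pos.mpr (by norm_num)
    field_simp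
    ring_nf
    linear_combination (-1 : ℝ) * h22
  rw [hr0, hexp, hcoef]
  have hsq : (0:ℝ) < Real.sqrt (2 * π * Real.log C) := Real.sqrt_pos.mpr (by positivity)
  rw [le_div_iff₀ (by positivity)]
  refine le_of_eq ?_
  field_simp
  ring

end AuxOST

/-- (OST success probability, Lemma 1) If `Φ` satisfies the `(k,ε,δ)`-StOC, the support of `α`
is a uniformly random ordered `k`-subset carrying fixed values `z` with `‖z‖₂ = 1`, the noise
`η ~ CN(0,σ²I)` is independent of the support, `λ = 2 max{ε, 2√(σ² log C)}` and
`α_min > 2λ`, then `Pr(Ŝ ≠ Π) ≤ δ + 2(√(2π log C)·C)⁻¹`. -/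
theorem stmt13 {N C k : ℕ} (hC : 2 ≤ C)
    [Nonempty {f : Fin k → Fin C // Function.Injective f}]
    (Φ : Matrix (Fin N) (Fin C) ℂ) (hunit : ∀ i : Fin C, colIP Φ i i = 1)
    (σ2 : NNReal) (hσ : 0 < σ2) (ε δ : ℝ) (hε : 0 ≤ ε) (hδ : 0 ≤ δ)
    (hStOC : ∀ z' : Fin k → ℂ,
      (PMF.uniformOfFintype {f : Fin k → Fin C // Function.Injective f}).toMeasure
        {f | ¬ ((∀ i : Fin k,
              ‖(∑ j, colIP Φ (f.1 i) (f.1 j) * z' j) - z' i‖ ≤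
                ε * Real.sqrt (∑ j, ‖z' j‖ ^ 2)) ∧
            ∀ i : Fin C, i ∉ Set.range f.1 →
              ‖∑ j, colIP Φ i (f.1 j) * z' j‖ ≤ ε * Real.sqrt (∑ j, ‖z' j‖ ^ 2))} ≤
        ENNReal.ofReal δ)
    (z : Fin k → ℂ) (hz2 : ∑ j, ‖z j‖ ^ 2 = 1)
    (lam : ℝ) (hlam : lam = 2 * max ε (2 * Real.sqrt ((σ2 : ℝ) * Real.log C)))
    (hmin : ∀ j, 2 * lam < ‖z j‖) :
    ((PMF.uniformOfFintype {f : Fin k → Fin C // Function.Injective f}).toMeasure.prod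
        (Measure.pi fun _ : Fin N => complexGaussian σ2))
      {p | {i : Fin C | lam <
          ‖∑ n, (starRingEnd ℂ) (Φ n i) * ((∑ j, Φ n (p.1.1 j) * z j) + p.2 n)‖} ≠
        Set.range p.1.1} ≤
      ENNReal.ofReal δ +
        ENNReal.ofReal (2 / (Real.sqrt (2 * Real.pi * Real.log C) * C)) := by
  classical
  set t := 2 * Real.sqrt ((σ2 : ℝ) * Real.log C) with ht
  set A : Set {f : Fin k → Fin C // Function.Injective f} :=
    {f | ¬ ((∀ i : Fin k,
          ‖(∑ j, colIP Φ (f.1 i) (f.1 j) * z j) - z i‖ ≤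
            ε * Real.sqrt (∑ j, ‖z j‖ ^ 2)) ∧
        ∀ i : Fin C, i ∉ Set.range f.1 →
          ‖∑ j, colIP Φ i (f.1 j) * z j‖ ≤ ε * Real.sqrt (∑ j, ‖z j‖ ^ 2))} with hA
  set B : Set (Fin N → ℂ) :=
    {η : Fin N → ℂ | ∃ i : Fin C, t < ‖∑ n, (starRingEnd ℂ) (Φ n i) * η n‖} with hB
  have hsqrt1 : Real.sqrt (∑ j, ‖z j‖ ^ 2) = 1 := by rw [hz2, Real.sqrt_one]
  have hεt : ε + t ≤ lam := by
    rw [hlam]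
    have h1 := le_max_left ε t
    have h2 := le_max_right ε t
    linarith
  -- the deterministic inclusion
  have hsub : {p : {f : Fin k → Fin C // Function.Injective f} × (Fin N → ℂ) |
        {i : Fin C | lam <
          ‖∑ n, (starRingEnd ℂ) (Φ n i) * ((∑ j, Φ n (p.1.1 j) * z j) + p.2 n)‖} ≠
        Set.range p.1.1} ⊆ (A ×ˢ Set.univ) ∪ (Set.univ ×ˢ B) := by
    intro p hp
    by_contra hcon
    simp only [Set.mem_union, Set.mem_prod, Set.mem_univ, and_true, true_and, not_or] at hcon
    obtain ⟨hpA, hpB⟩ := hcon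
    rw [hA, Set.mem_setOf_eq, not_not] at hpA
    obtain ⟨hcond1, hcond2⟩ := hpA
    simp only [hsqrt1, mul_one] at hcond1 hcond2
    rw [hB, Set.mem_setOf_eq] at hpB
    push_neg at hpB
    -- algebra
    have halg : ∀ i : Fin C,
        ∑ n, (starRingEnd ℂ) (Φ n i) * ((∑ j, Φ n (p.1.1 j) * z j) + p.2 n) =
          (∑ j, colIP Φ i (p.1.1 j) * z j) + ∑ n, (starRingEnd ℂ) (Φ n i) * p.2 n := by
      intro i
      simp only [mul_add, Finset.sum_add_distrib]
      congr 1
      simp_rw [Finset.mul_sum]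
      rw [Finset.sum_comm]
      refine Finset.sum_congr rfl fun j _ => ?_
      rw [colIP, Finset.sum_mul]
      exact Finset.sum_congr rfl fun n _ => by ring
    apply hp
    ext i
    simp only [Set.mem_setOf_eq, halg i]
    constructor
    · intro h
      by_contra hi
      have h1 := hcond2 i hi
      have h2 := hpB i
      have h3 := norm_add_le (∑ j, colIP Φ i (p.1.1 j) * z j)
        (∑ n, (starRingEnd ℂ) (Φ n i) * p.2 n)
      linarith
    · rintro ⟨j, rfl⟩
      have h1 := hcond1 j
      have h2 := hpB (p.1.1 j)
      have h3 := hmin j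
      set S := ∑ j', colIP Φ (p.1.1 j) (p.1.1 j') * z j' with hS
      set W := ∑ n, (starRingEnd ℂ) (Φ n (p.1.1 j)) * p.2 n with hW
      have key : ‖z j‖ ≤ ‖S + W‖ + ‖S - z j‖ + ‖W‖ := by
        have hid : z j = ((S + W) - (S - z j)) - W := by ring
        calc ‖z j‖ = ‖((S + W) - (S - z j)) - W‖ := by rw [← hid]
          _ ≤ ‖(S + W) - (S - z j)‖ + ‖W‖ := norm_sub_le _ _
          _ ≤ ‖S + W‖ + ‖S - z j‖ + ‖W‖ := by
              have := norm_sub_le (S + W) (S - z j)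
              linarith
      linarith
  refine (measure_mono hsub).trans ?_
  refine (measure_union_le _ _).trans ?_
  rw [Measure.prod_prod, Measure.prod_prod, measure_univ, measure_univ, mul_one, one_mul]
  exact add_le_add (hStOC z) (noise_bound hC Φ hunit σ2 hσ)
end
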